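/- arXiv:1102.0203 — 8 statements merged into one kernel-verified Lean document; each statement's English description precedes it below -/
import Mathlib

section
/- Let G be a finite strategic game and let G' be obtained from G by an iterated elimination of strictly dominated strategies (finitely many →_S steps). If s is a Nash equilibrium of G', then s is a Nash equilibrium of G. -/
variable {ι : Type*} {S : ι → Type*}

/-- `si` is strictly dominated by `si'` in the restriction `R`. -/
def StrictlyDominatedIn [DecidableEq ι] (p : ι → (∀ i, S i) → ℝ)
    (R : ∀ i, Set (S i)) (i : ι) (si si' : S i) : Prop :=
  ∀ t : ∀ j, S j, (∀ j, t j ∈ R j) →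
    p i (Function.update t i si') > p i (Function.update t i si)

/-- One step of elimination of strictly dominated strategies: `R →_S R'`. -/
def StepS [DecidableEq ι] (p : ι → (∀ i, S i) → ℝ) (R R' : ∀ i, Set (S i)) : Prop :=
  R ≠ R' ∧ (∀ i, R' i ⊆ R i) ∧
    ∀ i, ∀ si ∈ R i, si ∉ R' i → ∃ si' ∈ R i, StrictlyDominatedIn p R i si si'

/-- `s` is a Nash equilibrium of the restriction `R`. -/
def NashOn [DecidableEq ι] (p : ι → (∀ i, S i) → ℝ) (R : ∀ i, Set (S i))
    (s : ∀ i, S i) : Prop :=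
  (∀ i, s i ∈ R i) ∧ ∀ i, ∀ si' ∈ R i, p i s ≥ p i (Function.update s i si')

theorem step_nash [DecidableEq ι] [∀ i, Fintype (S i)]
    (p : ι → (∀ i, S i) → ℝ) (R R' : ∀ i, Set (S i)) (hstep : StepS p R R')
    (s : ∀ i, S i) (hs : NashOn p R' s) : NashOn p R s := by
  obtain ⟨-, hsub, hdom⟩ := hstep
  obtain ⟨hmem, hnash⟩ := hs
  refine ⟨fun i => hsub i (hmem i), fun i si' hsi' => ?_⟩
  -- pick a maximizer of p i (update s i ·) over R i
  have hfin : (R i).Finite := Set.toFinite _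
  have hne : (R i).Nonempty := ⟨si', hsi'⟩
  obtain ⟨m, hmR, hmax⟩ := Set.exists_max_image (R i) (fun x => p i (Function.update s i x)) hfin hne
  have hmR' : m ∈ R' i := by
    by_contra hm
    obtain ⟨d, hdR, hdomd⟩ := hdom i m hmR hm
    have := hdomd s (fun j => hsub j (hmem j))
    have h2 := hmax d hdR
    linarith
  calc p i (Function.update s i si') ≤ p i (Function.update s i m) := hmax si' hsi'
    _ ≤ p i s := hnash i m hmR'

/-- If the finite game `G` reduces by iterated elimination of strictly dominated
strategies to `G'` and `s` is a Nash equilibrium of `G'`, then `s` is a Nash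
equilibrium of `G`. -/
theorem stmt2 [DecidableEq ι] [Fintype ι] [∀ i, Fintype (S i)] [∀ i, Nonempty (S i)]
    (p : ι → (∀ i, S i) → ℝ) (R : ∀ i, Set (S i))
    (hreach : Relation.ReflTransGen (StepS p) (fun i => (Set.univ : Set (S i))) R)
    (s : ∀ i, S i) (hs : NashOn p R s) :
    NashOn p (fun i => (Set.univ : Set (S i))) s := by
  revert hs
  induction hreach with
  | refl => exact id
  | tail hab hbc ih =>
    exact fun hs => ih (step_nash p _ _ hbc s hs)
end

section
/- If a finite strategic game G is solved by iterated elimination of strictly dominated strategies, i.e., some iterated elimination leaves each player with exactly one strategy, then the resulting joint strategy is the unique Nash equilibrium of G. -/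
variable {ι : Type*} {S : ι → Type*}

lemma nash_forward [DecidableEq ι] (p : ι → (∀ i, S i) → ℝ) {R R' : ∀ i, Set (S i)}
    (h : StepS p R R') {s : ∀ i, S i} (hs : NashOn p R s) : NashOn p R' s := by
  obtain ⟨-, hsub, helim⟩ := h
  obtain ⟨hmem, hbest⟩ := hs
  have hmem' : ∀ i, s i ∈ R' i := by
    intro i
    by_contra hni
    obtain ⟨si', hsi', hdom⟩ := helim i (s i) (hmem i) hni
    have := hdom s hmem
    rw [Function.update_eq_self] at this
    exact absurd (hbest i si' hsi') (not_le.mpr this)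
  exact ⟨hmem', fun i si' hsi' => hbest i si' (hsub i hsi')⟩

lemma nash_backward [DecidableEq ι] [∀ i, Fintype (S i)]
    (p : ι → (∀ i, S i) → ℝ) {R R' : ∀ i, Set (S i)}
    (h : StepS p R R') {s : ∀ i, S i} (hs : NashOn p R' s) : NashOn p R s := by
  obtain ⟨-, hsub, helim⟩ := h
  obtain ⟨hmem', hbest'⟩ := hs
  have hmem : ∀ i, s i ∈ R i := fun i => hsub i (hmem' i)
  refine ⟨hmem, fun i => ?_⟩
  obtain ⟨sm, hsm, hmax⟩ := Set.exists_max_image (R i)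
    (fun x => p i (Function.update s i x)) (Set.toFinite _) ⟨s i, hmem i⟩
  have hsm' : sm ∈ R' i := by
    by_contra hn
    obtain ⟨si'', hsi'', hdom⟩ := helim i sm hsm hn
    exact absurd (hmax si'' hsi'') (not_le.mpr (hdom s hmem))
  intro si' hsi'
  calc p i s ≥ p i (Function.update s i sm) := hbest' i sm hsm'
    _ ≥ p i (Function.update s i si') := hmax si' hsi'

/-- If a finite strategic game is solved by IESDS, leaving each player with exactly
one strategy, then the resulting joint strategy is its unique Nash equilibrium. -/
theorem stmt3 [DecidableEq ι] [Fintype ι] [∀ i, Fintype (S i)] [∀ i, Nonempty (S i)]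
    (p : ι → (∀ i, S i) → ℝ) (R : ∀ i, Set (S i)) (s : ∀ i, S i)
    (hreach : Relation.ReflTransGen (StepS p) (fun i => (Set.univ : Set (S i))) R)
    (hsingle : ∀ i, R i = {s i}) :
    NashOn p (fun i => (Set.univ : Set (S i))) s ∧
      ∀ s' : ∀ i, S i, NashOn p (fun i => (Set.univ : Set (S i))) s' → s' = s := by
  have hRs : NashOn p R s := by
    refine ⟨fun i => by rw [hsingle i]; rfl, fun i si' hsi' => ?_⟩
    rw [hsingle i] at hsi'
    rw [hsi', Function.update_eq_self]
  constructor
  · clear hsingle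
    induction hreach with
    | refl => exact hRs
    | tail _ hstep ih => exact ih (nash_backward p hstep hRs)
  · intro s' hs'
    have : NashOn p R s' := by
      clear hRs hsingle
      induction hreach with
      | refl => exact hs'
      | tail _ hstep ih => exact nash_forward p hstep ih
    funext i
    have := this.1 i
    rw [hsingle i] at this
    exact this
end

section
/- Let G be a finite strategic game and let G' be obtained from G by an iterated elimination of weakly dominated strategies. If s is a Nash equilibrium of G', then s is a Nash equilibrium of G. -/
variable {ι : Type*} {S : ι → Type*}

/-- `si` is weakly dominated by `si'` in the restriction `R`. -/
def WeaklyDominatedIn [DecidableEq ι] (p : ι → (∀ i, S i) → ℝ)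
    (R : ∀ i, Set (S i)) (i : ι) (si si' : S i) : Prop :=
  (∀ t : ∀ j, S j, (∀ j, t j ∈ R j) →
      p i (Function.update t i si') ≥ p i (Function.update t i si)) ∧
    ∃ t : ∀ j, S j, (∀ j, t j ∈ R j) ∧
      p i (Function.update t i si') > p i (Function.update t i si)

/-- One step of elimination of weakly dominated strategies: `R →_W R'`. -/
def StepW [DecidableEq ι] (p : ι → (∀ i, S i) → ℝ) (R R' : ∀ i, Set (S i)) : Prop :=
  R ≠ R' ∧ (∀ i, R' i ⊆ R i) ∧
    ∀ i, ∀ si ∈ R i, si ∉ R' i → ∃ si' ∈ R i, WeaklyDominatedIn p R i si si'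

/-- For a removed strategy, there is a surviving strategy weakly at least as good
against every profile in `R`. -/
lemma exists_surviving_dominator [DecidableEq ι] [Fintype ι] [∀ i, Fintype (S i)]
    (p : ι → (∀ i, S i) → ℝ) (R R' : ∀ i, Set (S i)) (hstep : StepW p R R')
    (i : ι) (si : S i) (hsi : si ∈ R i) :
    ∃ si'' ∈ R' i, ∀ t : ∀ j, S j, (∀ j, t j ∈ R j) →
      p i (Function.update t i si'') ≥ p i (Function.update t i si) := by
  classical
  set T : Finset (∀ j, S j) := Finset.univ.filter (fun t => ∀ j, t j ∈ R j) with hT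
  set F : S i → ℝ := fun x => ∑ t ∈ T, p i (Function.update t i x) with hF
  set A : Finset (S i) := Finset.univ.filter
    (fun x => x ∈ R i ∧ ∀ t : ∀ j, S j, (∀ j, t j ∈ R j) →
      p i (Function.update t i x) ≥ p i (Function.update t i si)) with hA
  have hsiA : si ∈ A := by
    simp only [hA, Finset.mem_filter, Finset.mem_univ, true_and]
    exact ⟨hsi, fun t _ => le_refl _⟩
  obtain ⟨x, hxA, hxmax⟩ := Finset.exists_max_image A F ⟨si, hsiA⟩
  simp only [hA, Finset.mem_filter, Finset.mem_univ, true_and] at hxA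
  obtain ⟨hxR, hxdom⟩ := hxA
  refine ⟨x, ?_, hxdom⟩
  by_contra hx'
  obtain ⟨y, hyR, hyd⟩ := hstep.2.2 i x hxR hx'
  -- y ∈ A and F y > F x, contradicting maximality
  have hyA : y ∈ A := by
    simp only [hA, Finset.mem_filter, Finset.mem_univ, true_and]
    exact ⟨hyR, fun t ht => le_trans (hxdom t ht) (hyd.1 t ht)⟩
  have hlt : F x < F y := by
    obtain ⟨t0, ht0, ht0lt⟩ := hyd.2
    refine Finset.sum_lt_sum (fun t ht => ?_) ⟨t0, ?_, ht0lt⟩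
    · exact hyd.1 t (by simpa [hT] using ht)
    · simp [hT, ht0]
  exact absurd (hxmax y hyA) (not_le.mpr hlt)

lemma nash_step [DecidableEq ι] [Fintype ι] [∀ i, Fintype (S i)]
    (p : ι → (∀ i, S i) → ℝ) (R R' : ∀ i, Set (S i)) (hstep : StepW p R R')
    (s : ∀ i, S i) (hs : NashOn p R' s) : NashOn p R s := by
  obtain ⟨hmem, hbest⟩ := hs
  refine ⟨fun i => hstep.2.1 i (hmem i), fun i si' hsi' => ?_⟩
  obtain ⟨si'', hsi''R', hdom⟩ := exists_surviving_dominator p R R' hstep i si' hsi'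
  have hsR : ∀ j, s j ∈ R j := fun j => hstep.2.1 j (hmem j)
  exact le_trans (hdom s hsR) (hbest i si'' hsi''R')

/-- If the finite game `G` reduces by iterated elimination of weakly dominated
strategies to `G'` and `s` is a Nash equilibrium of `G'`, then `s` is a Nash
equilibrium of `G`. -/
theorem stmt4 [DecidableEq ι] [Fintype ι] [∀ i, Fintype (S i)] [∀ i, Nonempty (S i)]
    (p : ι → (∀ i, S i) → ℝ) (R : ∀ i, Set (S i))
    (hreach : Relation.ReflTransGen (StepW p) (fun i => (Set.univ : Set (S i))) R)
    (s : ∀ i, S i) (hs : NashOn p R s) :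
    NashOn p (fun i => (Set.univ : Set (S i))) s := by
  suffices h : ∀ A : ∀ i, Set (S i),
      Relation.ReflTransGen (StepW p) A R → NashOn p A s from h _ hreach
  intro A hA
  induction hA using Relation.ReflTransGen.head_induction_on with
  | refl => exact hs
  | head h _ ih => exact nash_step p _ _ h s ih
end

section
/- If a finite strategic game G is solved by iterated elimination of weakly dominated strategies (leaving each player exactly one strategy), then the resulting joint strategy is a Nash equilibrium of G. -/
variable {ι : Type*} {S : ι → Type*}

/-- One elimination step: every strategy in `R0 i` is weakly covered (against
profiles in `R0`) by some surviving strategy in `R1 i`. -/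
lemma stepW_lift [DecidableEq ι] [∀ i, Fintype (S i)]
    (p : ι → (∀ i, S i) → ℝ) {R0 R1 : ∀ i, Set (S i)} (h : StepW p R0 R1)
    (i : ι) : ∀ si' ∈ R0 i, ∃ si'' ∈ R1 i, ∀ t : ∀ j, S j, (∀ j, t j ∈ R0 j) →
      p i (Function.update t i si'') ≥ p i (Function.update t i si') := by
  set r : S i → S i → Prop := fun a b => WeaklyDominatedIn p R0 i b a with hr
  have htrans : IsTrans (S i) r := ⟨by
    rintro a b c ⟨hab, _⟩ ⟨hbc, t, ht, hlt⟩
    exact ⟨fun u hu => le_trans (hbc u hu) (hab u hu),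
      t, ht, lt_of_lt_of_le hlt (hab t ht)⟩⟩
  have hirr : IsIrrefl (S i) r := ⟨by
    rintro a ⟨_, t, _, hlt⟩; exact lt_irrefl _ hlt⟩
  have hwf : WellFounded r := Finite.wellFounded_of_trans_of_irrefl r
  intro si' hsi'
  induction si' using hwf.induction with
  | _ x ih =>
    by_cases hx : x ∈ R1 i
    · exact ⟨x, hx, fun t _ => le_refl _⟩
    · obtain ⟨y, hy, hdom⟩ := h.2.2 i x hsi' hx
      obtain ⟨z, hz, hzge⟩ := ih y hdom hy
      exact ⟨z, hz, fun t ht => le_trans (hdom.1 t ht) (hzge t ht)⟩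

/-- If a finite strategic game is solved by IEWDS, leaving each player with exactly
one strategy, then the resulting joint strategy is a Nash equilibrium of the game. -/
theorem stmt5 [DecidableEq ι] [Fintype ι] [∀ i, Fintype (S i)] [∀ i, Nonempty (S i)]
    (p : ι → (∀ i, S i) → ℝ) (R : ∀ i, Set (S i)) (s : ∀ i, S i)
    (hreach : Relation.ReflTransGen (StepW p) (fun i => (Set.univ : Set (S i))) R)
    (hsingle : ∀ i, R i = {s i}) :
    NashOn p (fun i => (Set.univ : Set (S i))) s := by
  have aux : ∀ R0 : ∀ i, Set (S i), Relation.ReflTransGen (StepW p) R0 R →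
      NashOn p R0 s := by
    intro R0 h
    induction h using Relation.ReflTransGen.head_induction_on with
    | refl =>
      refine ⟨fun i => by rw [hsingle i]; rfl, fun i si' hsi' => ?_⟩
      rw [hsingle i] at hsi'
      rw [hsi', Function.update_eq_self]
    | head hstep _ ih =>
      rename_i R0' R1 _
      obtain ⟨hmem, hnash⟩ := ih
      have hmem0 : ∀ j, s j ∈ R0' j := fun j => hstep.2.1 j (hmem j)
      refine ⟨hmem0, fun i si' hsi' => ?_⟩
      obtain ⟨si'', hsi'', hge⟩ := stepW_lift p hstep i si' hsi'
      exact le_trans (hge s hmem0) (hnash i si'' hsi'')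
  exact aux _ hreach
end

section
/- Let G be a strategic game and G' a restriction obtained from G by one step of elimination of never best responses. Then every Nash equilibrium of G is a Nash equilibrium of G', and conversely, if G is finite and s is a Nash equilibrium of G', then s is a Nash equilibrium of G. -/
variable {ι : Type*} {S : ι → Type*}

/-- `si` is a best response in the restriction `R` to the joint strategy `t` of the
opponents (the `i`-th component of `t` is irrelevant). -/
def BestResponseIn [DecidableEq ι] (p : ι → (∀ i, S i) → ℝ)
    (R : ∀ i, Set (S i)) (i : ι) (si : S i) (t : ∀ j, S j) : Prop :=
  ∀ si' ∈ R i, p i (Function.update t i si) ≥ p i (Function.update t i si')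

/-- One step of elimination of never best responses: `R →_N R'`. -/
def StepN [DecidableEq ι] (p : ι → (∀ i, S i) → ℝ) (R R' : ∀ i, Set (S i)) : Prop :=
  R ≠ R' ∧ (∀ i, R' i ⊆ R i) ∧
    ∀ i, ∀ si ∈ R i, si ∉ R' i →
      ¬ ∃ t : ∀ j, S j, (∀ j, t j ∈ R j) ∧ BestResponseIn p R i si t

/-- If `G'` results from `G` by one step of elimination of never best responses,
then every Nash equilibrium of `G` is a Nash equilibrium of `G'`; conversely, if
`G` is finite, every Nash equilibrium of `G'` is a Nash equilibrium of `G`. -/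
theorem stmt6 [DecidableEq ι] (p : ι → (∀ i, S i) → ℝ) (R' : ∀ i, Set (S i))
    (hstep : StepN p (fun i => (Set.univ : Set (S i))) R') (s : ∀ i, S i) :
    (NashOn p (fun i => (Set.univ : Set (S i))) s → NashOn p R' s) ∧
      ((∀ i, Finite (S i)) → NashOn p R' s →
        NashOn p (fun i => (Set.univ : Set (S i))) s) := by
  obtain ⟨-, hsub, helim⟩ := hstep
  constructor
  · rintro ⟨-, hbr⟩
    constructor
    · intro i
      by_contra hni
      apply helim i (s i) (Set.mem_univ _) hni
      refine ⟨s, fun j => Set.mem_univ _, fun si' _ => ?_⟩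
      rw [Function.update_eq_self]
      exact hbr i si' (Set.mem_univ _)
    · intro i si' hsi'
      exact hbr i si' (Set.mem_univ _)
  · rintro hfin ⟨hmem, hbr⟩
    refine ⟨fun i => Set.mem_univ _, fun i si' _ => ?_⟩
    haveI := hfin i
    haveI : Nonempty (S i) := ⟨s i⟩
    obtain ⟨sm, hsm⟩ := Finite.exists_max (fun x : S i => p i (Function.update s i x))
    have hsmR' : sm ∈ R' i := by
      by_contra hni
      exact helim i sm (Set.mem_univ _) hni
        ⟨s, fun j => Set.mem_univ _, fun x _ => hsm x⟩
    calc p i (Function.update s i si') ≤ p i (Function.update s i sm) := hsm si'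
      _ ≤ p i s := hbr i sm hsmR'
end

section
/- In a finite two-player strategic game, if a pure strategy s_i of player i is not strictly dominated by any mixed strategy, then there exists a mixed strategy m_{-i} of the opponent to which s_i is a best response. (Pearce's lemma, via the separating hyperplane theorem.) -/
/-- `m` is a probability distribution on the finite type `A`. -/
def IsMixed {A : Type*} [Fintype A] (m : A → ℝ) : Prop :=
  (∀ a, 0 ≤ m a) ∧ ∑ a, m a = 1

/-- Pearce's lemma: in a finite two-player game, if a pure strategy `s₁` of
player 1 is not strictly dominated by any mixed strategy, then it is a best
response to some mixed strategy of the opponent. -/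
theorem stmt15 {S₁ S₂ : Type*} [Fintype S₁] [Fintype S₂] [Nonempty S₁] [Nonempty S₂]
    (p₁ : S₁ → S₂ → ℝ) (s₁ : S₁)
    (hnd : ∀ m₁ : S₁ → ℝ, IsMixed m₁ → ¬ ∀ b : S₂, (∑ a, m₁ a * p₁ a b) > p₁ s₁ b) :
    ∃ m₂ : S₂ → ℝ, IsMixed m₂ ∧
      ∀ m₁' : S₁ → ℝ, IsMixed m₁' →
        (∑ b, m₂ b * p₁ s₁ b) ≥ ∑ a, ∑ b, m₁' a * m₂ b * p₁ a b := by
  classical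
  set q : S₂ → ℝ := p₁ s₁ with hq
  set F : (S₁ → ℝ) → (S₂ → ℝ) := fun m b => ∑ a, m a * p₁ a b with hF
  set U : Set (S₂ → ℝ) := Set.univ.pi fun b => Set.Ioi (q b) with hU
  set D : Set (S₂ → ℝ) := F '' {m | IsMixed m} with hD
  have hUopen : IsOpen U := isOpen_set_pi Set.finite_univ fun b _ => isOpen_Ioi
  have hUconv : Convex ℝ U := convex_pi fun b _ => convex_Ioi _
  have hDconv : Convex ℝ D := by
    rintro x ⟨m, hm, rfl⟩ z ⟨m', hm', rfl⟩ a b ha hb hab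
    refine ⟨a • m + b • m', ⟨fun i => ?_, ?_⟩, ?_⟩
    · exact add_nonneg (mul_nonneg ha (hm.1 i)) (mul_nonneg hb (hm'.1 i))
    · simp [Finset.sum_add_distrib, ← Finset.mul_sum, hm.2, hm'.2, hab]
    · funext c
      simp only [hF, Pi.add_apply, Pi.smul_apply, smul_eq_mul]
      rw [Finset.mul_sum, Finset.mul_sum, ← Finset.sum_add_distrib]
      congr 1; funext i; ring
  have hdisj : Disjoint U D := by
    rw [Set.disjoint_left]
    rintro x hx ⟨m, hm, rfl⟩
    exact hnd m hm fun b => hx b (Set.mem_univ b)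
  obtain ⟨f, u, hfU, hfD⟩ := geometric_hahn_banach_open hUconv hUopen hDconv hdisj
  set c : S₂ → ℝ := fun b => f (Pi.single b 1) with hc
  have hrep : ∀ y : S₂ → ℝ, f y = ∑ b, y b * c b := by
    intro y
    conv_lhs => rw [← Finset.univ_sum_single y]
    rw [map_sum]
    congr 1; funext b
    have : Pi.single b (y b) = y b • (Pi.single b 1 : S₂ → ℝ) := by
      rw [← Pi.single_smul, smul_eq_mul, mul_one]
    rw [this, map_smul, smul_eq_mul]
  -- membership of shifted points in U
  have hmem : ∀ ε : ℝ, 0 < ε → ∀ t : ℝ, 0 ≤ t → ∀ b₀ : S₂,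
      (q + ε • (1 : S₂ → ℝ) + t • (Pi.single b₀ 1 : S₂ → ℝ)) ∈ U := by
    intro ε hε t ht b₀ b _
    simp only [Pi.add_apply, Pi.smul_apply, Pi.one_apply, smul_eq_mul, mul_one]
    have : 0 ≤ t * (Pi.single b₀ 1 : S₂ → ℝ) b := by
      rcases eq_or_ne b b₀ with rfl | h
      · simp [ht]
      · simp [Pi.single_eq_of_ne h]
    simp only [Set.mem_Ioi]; linarith
  have hf1 : ∀ ε : ℝ, 0 < ε → f q + ε * f 1 < u := by
    intro ε hε
    have := hfU _ (by simpa using hmem ε hε 0 le_rfl (Classical.arbitrary S₂))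
    simpa [map_add, map_smul, smul_eq_mul] using this
  -- c b ≤ 0
  have hcneg : ∀ b, c b ≤ 0 := by
    intro b
    by_contra h
    push_neg at h
    set t : ℝ := max 0 ((u - f q - f 1) / c b) + 1 with htdef
    have ht0 : 0 ≤ t := by positivity
    have := hfU _ (hmem 1 one_pos t ht0 b)
    simp only [map_add, map_smul, smul_eq_mul, one_mul] at this
    rw [show f (Pi.single b 1 : S₂ → ℝ) = c b from rfl] at this
    have h2 : (u - f q - f 1) / c b < t := by
      have : (u - f q - f 1) / c b ≤ max 0 ((u - f q - f 1) / c b) := le_max_right _ _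
      linarith
    have h3 : u - f q - f 1 < t * c b := by
      rw [div_lt_iff₀ h] at h2; linarith [h2]
    linarith
  have hq_le : f q ≤ u := by
    have : Filter.Tendsto (fun ε : ℝ => f q + ε * f 1) (nhdsWithin 0 (Set.Ioi 0))
        (nhds (f q)) := by
      have hcont : Continuous fun ε : ℝ => f q + ε * f 1 := continuous_const.add (continuous_id.mul continuous_const)
      have := hcont.tendsto 0
      simp only [zero_mul, add_zero] at this
      exact this.mono_left nhdsWithin_le_nhds
    refine le_of_tendsto this ?_
    filter_upwards [self_mem_nhdsWithin] with ε hε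
    exact (hf1 ε hε).le
  -- key: for x in D, f q ≤ f x
  have hkey : ∀ x ∈ D, f q ≤ f x := fun x hx => hq_le.trans (hfD x hx)
  -- f ≠ 0: q itself (as image of Dirac at s₁) is in D, and U nonempty gives strict
  have hfne : ∃ b, c b ≠ 0 := by
    by_contra h
    push_neg at h
    have hf0 : ∀ y, f y = 0 := fun y => by simp [hrep, h]
    have h1 := hf1 1 one_pos
    have hqD : q ∈ D := ⟨Pi.single s₁ 1, ⟨fun a => by
        rcases eq_or_ne a s₁ with rfl | ha
        · simp
        · simp [Pi.single_eq_of_ne ha], by simp⟩, by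
      funext b; simp [hF]
      rw [Finset.sum_eq_single s₁]
      · simp [hq]
      · intro a _ ha; simp [Pi.single_eq_of_ne ha]
      · simp⟩
    have h2 := hfD q hqD
    rw [hf0] at h1 h2
    rw [hf0] at h1
    linarith
  set lam : S₂ → ℝ := fun b => -c b with hlam
  have hlamnn : ∀ b, 0 ≤ lam b := fun b => by simp [hlam]; linarith [hcneg b]
  have hlampos : 0 < ∑ b, lam b := by
    obtain ⟨b₀, hb₀⟩ := hfne
    have : 0 < lam b₀ := by
      have h2 : c b₀ < 0 := lt_of_le_of_ne (hcneg b₀) hb₀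
      simp only [hlam]; linarith
    exact Finset.sum_pos' (fun b _ => hlamnn b) ⟨b₀, Finset.mem_univ _, this⟩
  set T := ∑ b, lam b with hT
  refine ⟨fun b => lam b / T, ⟨fun b => div_nonneg (hlamnn b) hlampos.le, by
    rw [← Finset.sum_div, div_self hlampos.ne']⟩, ?_⟩
  intro m hm
  have hxD : F m ∈ D := ⟨m, hm, rfl⟩
  have := hkey _ hxD
  rw [hrep, hrep] at this
  -- this : ∑ b, q b * c b ≤ ∑ b, F m b * c b
  have key2 : ∑ b, F m b * lam b ≤ ∑ b, q b * lam b := by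
    simp only [hlam, mul_neg]
    rw [Finset.sum_neg_distrib, Finset.sum_neg_distrib]
    linarith
  show ∑ b, lam b / T * q b ≥ ∑ a, ∑ b, m a * (lam b / T) * p₁ a b
  have hR : ∑ a, ∑ b, m a * (lam b / T) * p₁ a b = ∑ b, F m b * lam b / T := by
    rw [Finset.sum_comm]
    congr 1; funext b
    rw [hF]
    rw [Finset.sum_mul, Finset.sum_div]
    congr 1; funext a; ring
  have hL : ∑ b, lam b / T * q b = ∑ b, q b * lam b / T := by
    congr 1; funext b; ring
  rw [hR, hL, ← Finset.sum_div, ← Finset.sum_div]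
  gcongr
end

section
/- Groves' theorem: For a decision problem with an efficient decision rule f, every Groves mechanism is incentive compatible; that is, for all joint types θ, every player i, and every reported type θ'_i, u_i((f,t)(θ_i, θ_{-i}), θ_i) ≥ u_i((f,t)(θ'_i, θ_{-i}), θ_i). -/
/-- Groves' theorem: for a decision problem with an efficient decision rule,
every Groves mechanism is incentive compatible. -/
theorem stmt16 {ι : Type*} [Fintype ι] [DecidableEq ι] {D : Type*} [Nonempty D]
    {Θ : ι → Type*} [∀ i, Nonempty (Θ i)]
    (v : ∀ i, D → Θ i → ℝ) (f : (∀ i, Θ i) → D)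
    (heff : ∀ (θ : ∀ i, Θ i) (d' : D),
      ∑ i, v i (f θ) (θ i) ≥ ∑ i, v i d' (θ i))
    (h : ∀ _ : ι, (∀ j, Θ j) → ℝ)
    (hh : ∀ i (θ θ' : ∀ j, Θ j), (∀ j, j ≠ i → θ j = θ' j) → h i θ = h i θ')
    (t : ι → (∀ j, Θ j) → ℝ)
    (ht : ∀ i θ, t i θ = (∑ j ∈ Finset.univ.erase i, v j (f θ) (θ j)) + h i θ) :
    ∀ (θ : ∀ i, Θ i) (i : ι) (θi' : Θ i),
      v i (f θ) (θ i) + t i θ ≥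
        v i (f (Function.update θ i θi')) (θ i) + t i (Function.update θ i θi') := by
  intro θ i θi'
  set θ' := Function.update θ i θi' with hθ'
  have hhe : h i θ' = h i θ := hh i θ' θ (fun j hj => Function.update_of_ne hj _ _)
  rw [ht, ht, hhe]
  have key : ∀ d : D, v i d (θ i) + ∑ j ∈ Finset.univ.erase i, v j d (θ j)
      = ∑ j, v j d (θ j) := by
    intro d
    exact Finset.add_sum_erase _ (fun j => v j d (θ j)) (Finset.mem_univ i)
  have herase : ∀ j ∈ Finset.univ.erase i, v j (f θ') (θ' j) = v j (f θ') (θ j) := by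
    intro j hj
    rw [hθ', Function.update_of_ne (Finset.ne_of_mem_erase hj)]
  rw [Finset.sum_congr rfl herase]
  have := heff θ (f θ')
  linarith [key (f θ), key (f θ')]
end

section
/- In the pivotal mechanism for the sealed-bid auction, the winner (the least-index player with the maximal bid) pays the second-highest bid: t_i(θ) = -θ*_2 if i = argsmax θ, and t_i(θ) = 0 otherwise, where θ*_2 is the second largest value among θ_1,...,θ_n. -/
/-- In the pivotal mechanism for the sealed-bid auction, the winner (the least-index
player with a maximal bid) pays the second-highest bid, and all other players pay
nothing. -/
theorem stmt18 (n : ℕ) (hn : 1 < n) (θ : Fin n → ℝ) (hθ : ∀ i, 0 ≤ θ i)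
    (v : Fin n → Fin n → ℝ → ℝ)
    (hv : ∀ i d x, v i d x = if d = i then x else 0)
    (i₀ : Fin n) (hmax : ∀ j, θ j ≤ θ i₀) (hleast : ∀ j, j < i₀ → θ j < θ i₀)
    (f : (Fin n → ℝ) → Fin n) (hf : f θ = i₀)
    (t : Fin n → ℝ)
    (ht : ∀ i, t i = (∑ j ∈ Finset.univ.erase i, v j (f θ) (θ j)) -
      ⨆ d : Fin n, ∑ j ∈ Finset.univ.erase i, v j d (θ j)) :
    t i₀ = -(⨆ j : {j : Fin n // j ≠ i₀}, θ j.1) ∧ ∀ i, i ≠ i₀ → t i = 0 := by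
  haveI : NeZero n := ⟨by omega⟩
  -- the sums simplify
  have hsum : ∀ i d, (∑ j ∈ Finset.univ.erase i, v j d (θ j)) =
      if d = i then 0 else θ d := by
    intro i d
    have h1 : (∑ j ∈ Finset.univ.erase i, v j d (θ j))
        = ∑ j ∈ Finset.univ.erase i, if d = j then θ j else 0 := by
      refine Finset.sum_congr rfl ?_
      intro j _; rw [hv]
    rw [h1, Finset.sum_ite_eq]
    by_cases h : d = i <;> simp [h]
  -- a witness ≠ i₀
  obtain ⟨j₁, hj₁⟩ : ∃ j : Fin n, j ≠ i₀ := by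
    by_cases h : i₀ = ⟨0, by omega⟩
    · exact ⟨⟨1, hn⟩, by rw [h]; intro hc; exact absurd (Fin.mk.injEq .. ▸ hc) (by omega)⟩
    · exact ⟨⟨0, by omega⟩, fun hc => h hc.symm⟩
  haveI : Nonempty {j : Fin n // j ≠ i₀} := ⟨⟨j₁, hj₁⟩⟩
  have hbdd : ∀ i : Fin n, BddAbove (Set.range fun d : Fin n =>
      ∑ j ∈ Finset.univ.erase i, v j d (θ j)) :=
    fun i => (Set.finite_range _).bddAbove
  have hbdd2 : BddAbove (Set.range fun j : {j : Fin n // j ≠ i₀} => θ j.1) :=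
    (Set.finite_range _).bddAbove
  set S := ⨆ j : {j : Fin n // j ≠ i₀}, θ j.1 with hS
  have hS0 : 0 ≤ S := le_trans (hθ j₁) (le_ciSup hbdd2 ⟨j₁, hj₁⟩)
  constructor
  · -- winner case
    have hsup : (⨆ d : Fin n, ∑ j ∈ Finset.univ.erase i₀, v j d (θ j)) = S := by
      apply le_antisymm
      · apply ciSup_le
        intro d
        rw [hsum]
        by_cases h : d = i₀
        · simpa [h] using hS0
        · simpa [h] using le_ciSup hbdd2 ⟨d, h⟩
      · apply ciSup_le
        rintro ⟨j, hj⟩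
        have := le_ciSup (hbdd i₀) j
        rwa [hsum, if_neg hj] at this
    rw [ht i₀, hsup, hf, hsum, if_pos rfl, zero_sub]
  · intro i hi
    have hsup : (⨆ d : Fin n, ∑ j ∈ Finset.univ.erase i, v j d (θ j)) = θ i₀ := by
      apply le_antisymm
      · apply ciSup_le
        intro d
        rw [hsum]
        by_cases h : d = i
        · simpa [h] using hθ i₀
        · simpa [h] using hmax d
      · have := le_ciSup (hbdd i) i₀
        rwa [hsum, if_neg (Ne.symm hi)] at this
    rw [ht i, hsup, hf, hsum, if_neg (Ne.symm hi), sub_self]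
end
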